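/- Let E ⊆ F be a finite separable field extension with trace form tr_{F/E}, let (e_1,…,e_n) be an E-basis of F and (u_1,…,u_n) the dual basis with respect to the trace form (tr_{F/E}(e_i u_j) = δ_{ij}). Then for any σ in the absolute Galois group of E (acting on a separable closure containing F), the sum Σ_{i=1}^n e_i · σ(u_i) equals 1 if σ fixes F pointwise, and equals 0 otherwise. -/

import Mathlib

open Module

/-- let `F/E` be a finite separable extension, `(e_i)` an `E`-basis of `F`
and `(u_i)` the dual basis for the trace form.  For any `σ` in the absolute Galois group
of `E` (acting on a separably closed field `Ω` containing `F`), the sum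
`Σ e_i · σ(u_i)` equals `1` if `σ` fixes `F` pointwise, and `0` otherwise. -/
theorem statement_10 (E F Ω : Type*) [Field E] [Field F] [Field Ω]
    [Algebra E F] [Algebra E Ω] [Algebra F Ω] [IsScalarTower E F Ω]
    [FiniteDimensional E F] [Algebra.IsSeparable E F] [IsSepClosed Ω]
    {ι : Type*} [Fintype ι] [DecidableEq ι]
    (b : Basis ι E F) (u : ι → F)
    (hdual : ∀ i j, Algebra.trace E F (b i * u j) = if i = j then 1 else 0)
    (σ : Ω ≃ₐ[E] Ω) :
    ((∀ x : F, σ (algebraMap F Ω x) = algebraMap F Ω x) →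
      ∑ i, algebraMap F Ω (b i) * σ (algebraMap F Ω (u i)) = 1) ∧
    ((¬ ∀ x : F, σ (algebraMap F Ω x) = algebraMap F Ω x) →
      ∑ i, algebraMap F Ω (b i) * σ (algebraMap F Ω (u i)) = 0) := by
  classical
  -- Pass to an algebraic closure of Ω to use the trace formula.
  let A := AlgebraicClosure Ω
  let j : Ω →ₐ[E] A := IsScalarTower.toAlgHom E Ω A
  have hjinj : Function.Injective j := j.injective
  -- Bijection between embeddings into Ω and into A
  have hcardΩ : Fintype.card (F →ₐ[E] Ω) = finrank E F :=
    AlgHom.card_of_splits E F Ω (fun x =>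
      IsSepClosed.splits_codomain _ (Algebra.IsSeparable.isSeparable E x))
  have hcardA : Fintype.card (F →ₐ[E] A) = finrank E F := AlgHom.card E F A
  have hcompinj : Function.Injective (fun τ : F →ₐ[E] Ω => j.comp τ) := by
    intro τ₁ τ₂ h
    exact AlgHom.ext fun x => hjinj (AlgHom.congr_fun h x)
  have hcompbij : Function.Bijective (fun τ : F →ₐ[E] Ω => j.comp τ) :=
    (Fintype.bijective_iff_injective_and_card _).mpr ⟨hcompinj, hcardΩ.trans hcardA.symm⟩
  -- Trace formula over Ω
  have htr : ∀ x : F, algebraMap E Ω (Algebra.trace E F x) = ∑ τ : F →ₐ[E] Ω, τ x := by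
    intro x
    apply hjinj
    have h1 : algebraMap E A (Algebra.trace E F x) = ∑ τ' : F →ₐ[E] A, τ' x :=
      trace_eq_sum_embeddings A
    have h2 : ∑ τ' : F →ₐ[E] A, τ' x = ∑ τ : F →ₐ[E] Ω, j (τ x) :=
      (Fintype.sum_bijective _ hcompbij _ _ (fun τ => rfl)).symm
    have h3 : (j : Ω →+* A).comp (algebraMap E Ω) = algebraMap E A := (IsScalarTower.algebraMap_eq E Ω A).symm
    calc j (algebraMap E Ω (Algebra.trace E F x))
        = algebraMap E A (Algebra.trace E F x) := RingHom.congr_fun h3 _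
      _ = ∑ τ : F →ₐ[E] Ω, j (τ x) := h1.trans h2
      _ = j (∑ τ : F →ₐ[E] Ω, τ x) := (map_sum j _ _).symm
  -- Matrix argument
  have hcardι : Fintype.card (F →ₐ[E] Ω) = Fintype.card ι := by
    rw [hcardΩ, finrank_eq_card_basis b]
  let e : ι ≃ (F →ₐ[E] Ω) := (Fintype.equivOfCardEq hcardι).symm
  let M : Matrix ι ι Ω := fun i k => (e k) (u i)
  let N : Matrix ι ι Ω := fun k jj => (e k) (b jj)
  have hMN : M * N = 1 := by
    ext i jj
    simp only [Matrix.mul_apply, Matrix.one_apply]; simp only [M, N]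
    have : ∑ k, (e k) (u i) * (e k) (b jj) = ∑ τ : F →ₐ[E] Ω, τ (u i * b jj) := by
      rw [← Equiv.sum_comp e (fun τ => τ (u i * b jj))]
      exact Finset.sum_congr rfl fun k _ => (map_mul _ _ _).symm
    rw [this, ← htr, mul_comm (u i) (b jj), hdual jj i]
    by_cases h : i = jj <;> simp [h, eq_comm]
  have hNM : N * M = 1 := mul_eq_one_comm.mp hMN
  -- Evaluate the (ι₀, σ∘ι₀) entry
  let ι₀ : F →ₐ[E] Ω := IsScalarTower.toAlgHom E F Ω
  let σ' : F →ₐ[E] Ω := (σ : Ω →ₐ[E] Ω).comp ι₀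
  have key : ∑ i, algebraMap F Ω (b i) * σ (algebraMap F Ω (u i)) =
      if ι₀ = σ' then 1 else 0 := by
    have := Matrix.ext_iff.mpr hNM (e.symm ι₀) (e.symm σ')
    simp only [Matrix.mul_apply, Matrix.one_apply, Equiv.apply_symm_apply,
      EmbeddingLike.apply_eq_iff_eq] at this; simp only [N, M, Equiv.apply_symm_apply] at this
    rw [← this]
    refine Finset.sum_congr rfl fun i _ => rfl
  have hiff : (ι₀ = σ') ↔ (∀ x : F, σ (algebraMap F Ω x) = algebraMap F Ω x) := by
    constructor
    · intro h x
      exact (AlgHom.congr_fun h x).symm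
    · intro h
      exact AlgHom.ext fun x => (h x).symm
  constructor
  · intro h
    rw [key, if_pos (hiff.mpr h)]
  · intro h
    rw [key, if_neg (fun hh => h (hiff.mp hh))]
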